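/- For |z| < 1, log²(1-z)/(1-z) = ∑_{n=0}^∞ ((H_n)² - H_n^{(2)}) z^n. -/

import Mathlib

/-- The generalized harmonic number `H_n^{(m)} = ∑_{k=1}^n 1/k^m` as a real number. -/
noncomputable def genHarmonic (m n : ℕ) : ℝ := ∑ k ∈ Finset.range n, (1 : ℝ) / ((k + 1 : ℝ)) ^ m

open Finset

lemma genHarmonic_succ (m n : ℕ) :
    genHarmonic m (n + 1) = genHarmonic m n + 1 / ((n + 1 : ℝ)) ^ m := by
  simp [genHarmonic, Finset.sum_range_succ]

lemma genHarmonic_nonneg (m n : ℕ) : 0 ≤ genHarmonic m n := by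
  apply Finset.sum_nonneg
  intro k _
  positivity

lemma genHarmonic_le (n : ℕ) : genHarmonic 1 n ≤ (n : ℝ) := by
  calc genHarmonic 1 n ≤ ∑ k ∈ Finset.range n, (1 : ℝ) := by
        apply Finset.sum_le_sum
        intro k _
        rw [pow_one, div_le_one (by positivity)]
        norm_num
    _ = (n : ℝ) := by simp

/-- reflected harmonic sum -/
lemma sum_reflect_harm (n : ℕ) :
    ∑ k ∈ range n, (1 : ℝ) / ((n - k : ℕ) : ℝ) = genHarmonic 1 n := by
  rw [genHarmonic]
  rw [← Finset.sum_range_reflect (fun k => (1 : ℝ) / ((k : ℝ) + 1) ^ 1) n]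
  apply Finset.sum_congr rfl
  intro k hk
  rw [Finset.mem_range] at hk
  have h : n - 1 - k + 1 = n - k := by omega
  rw [pow_one]
  congr 1
  rw [← h]
  push_cast [Nat.sub_sub]
  ring

/-- The double-sum step: `∑_{k=1}^n 1/(k(n+1-k)) = 2 H_n/(n+1)` -/
lemma step_sum (n : ℕ) :
    ∑ k ∈ range n, (1 : ℝ) / (((n - k : ℕ) : ℝ) * ((k : ℝ) + 1)) =
      2 * genHarmonic 1 n / ((n : ℝ) + 1) := by
  have hpos : (0 : ℝ) < (n : ℝ) + 1 := by positivity
  rw [eq_div_iff (ne_of_gt hpos)]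
  rw [Finset.sum_mul]
  have : ∀ k ∈ range n, (1 : ℝ) / (((n - k : ℕ) : ℝ) * ((k : ℝ) + 1)) * ((n : ℝ) + 1)
      = (1 : ℝ) / ((k : ℝ) + 1) + (1 : ℝ) / ((n - k : ℕ) : ℝ) := by
    intro k hk
    rw [Finset.mem_range] at hk
    have h1 : ((n - k : ℕ) : ℝ) = (n : ℝ) - (k : ℝ) := by
      push_cast [Nat.cast_sub hk.le]; ring
    have h2 : (0 : ℝ) < ((n - k : ℕ) : ℝ) := by
      have : 0 < n - k := by omega
      exact_mod_cast this
    have h3 : (0 : ℝ) < (k : ℝ) + 1 := by positivity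
    field_simp
    rw [h1]; ring
  rw [Finset.sum_congr rfl this, Finset.sum_add_distrib, sum_reflect_harm]
  have : ∑ k ∈ range n, (1 : ℝ) / ((k : ℝ) + 1) = genHarmonic 1 n := by
    simp [genHarmonic]
  rw [this]; ring

/-- key combinatorial identity: `∑_{k=0}^n H_{n-k}/k = H_n² - H_n^{(2)}` (with `1/0 = 0`). -/
lemma key_identity (n : ℕ) :
    ∑ k ∈ range (n + 1), genHarmonic 1 (n - k) / (k : ℝ) =
      (genHarmonic 1 n) ^ 2 - genHarmonic 2 n := by
  induction n with
  | zero => simp [genHarmonic]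
  | succ n ih =>
    have step : ∑ k ∈ range (n + 2), genHarmonic 1 (n + 1 - k) / (k : ℝ)
        = ∑ k ∈ range (n + 1), genHarmonic 1 (n - k) / (k : ℝ)
          + ∑ k ∈ range n, (1 : ℝ) / (((n - k : ℕ) : ℝ) * ((k : ℝ) + 1)) := by
      rw [Finset.sum_range_succ]
      have hlast : genHarmonic 1 (n + 1 - (n + 1)) / ((n + 1 : ℕ) : ℝ) = 0 := by
        simp [genHarmonic]
      rw [hlast, add_zero]
      have hterm : ∀ k ∈ range (n + 1),
          genHarmonic 1 (n + 1 - k) / (k : ℝ)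
            = genHarmonic 1 (n - k) / (k : ℝ) + (1 / (((n - k : ℕ) : ℝ) + 1)) / (k : ℝ) := by
        intro k hk
        rw [Finset.mem_range] at hk
        have h : n + 1 - k = (n - k) + 1 := by omega
        rw [h, genHarmonic_succ, pow_one, add_div]
      rw [Finset.sum_congr rfl hterm, Finset.sum_add_distrib]
      congr 1
      -- peel the k = 0 term
      rw [Finset.sum_range_succ']
      simp only [Nat.cast_zero, div_zero, add_zero]
      apply Finset.sum_congr rfl
      intro k hk
      rw [Finset.mem_range] at hk
      have h1 : n - (k + 1) + 1 = n - k := by omega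
      have h2 : ((n - (k + 1) : ℕ) : ℝ) + 1 = ((n - k : ℕ) : ℝ) := by
        rw [← h1]; push_cast; ring
      rw [h2]
      push_cast
      rw [div_div]
    rw [step, ih, step_sum]
    rw [genHarmonic_succ 1 n, genHarmonic_succ 2 n]
    have h : ((n : ℝ) + 1) ≠ 0 := by positivity
    field_simp
    ring

theorem log_sq_generating_function (z : ℝ) (hz : |z| < 1) :
    (Real.log (1 - z)) ^ 2 / (1 - z) =
      ∑' n : ℕ, ((genHarmonic 1 n) ^ 2 - genHarmonic 2 n) * z ^ n := by
  have hz' : ‖z‖ < 1 := by rwa [Real.norm_eq_abs]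
  -- a sums to -log(1-z)
  have ha : HasSum (fun n : ℕ => z ^ n / (n : ℝ)) (-Real.log (1 - z)) := by
    have h := Real.hasSum_pow_div_log_of_abs_lt_one hz
    have h2 : HasSum (fun n : ℕ => z ^ (n + 1) / ((n + 1 : ℕ) : ℝ)) (-Real.log (1 - z)) := by
      convert h using 2 with n
      push_cast
      ring
    have h3 := (hasSum_nat_add_iff (f := fun n : ℕ => z ^ n / (n : ℝ)) 1).mp h2
    simpa using h3
  have hc : HasSum (fun n : ℕ => z ^ n) (1 - z)⁻¹ := hasSum_geometric_of_norm_lt_one hz'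
  -- norm summability
  have hna : Summable fun n : ℕ => ‖z ^ n / (n : ℝ)‖ := by
    refine Summable.of_nonneg_of_le (fun n => norm_nonneg _) ?_
      (summable_geometric_of_lt_one (abs_nonneg z) hz)
    · intro n
      rw [Real.norm_eq_abs, abs_div, abs_pow, Nat.abs_cast]
      rcases Nat.eq_zero_or_pos n with h | h
      · subst h; simp
      · apply div_le_self (by positivity)
        exact_mod_cast h
  have hnc : Summable fun n : ℕ => ‖z ^ n‖ := by
    simpa [Real.norm_eq_abs, abs_pow] using summable_geometric_of_lt_one (abs_nonneg z) hz
  have hnb : Summable fun n : ℕ => ‖genHarmonic 1 n * z ^ n‖ := by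
    refine Summable.of_nonneg_of_le (fun n => norm_nonneg _) ?_
      (summable_pow_mul_geometric_of_norm_lt_one 1 (r := |z|) (by rwa [Real.norm_eq_abs, abs_abs]))
    · intro n
      rw [Real.norm_eq_abs, abs_mul, abs_pow, abs_of_nonneg (genHarmonic_nonneg 1 n), pow_one]
      exact mul_le_mul_of_nonneg_right (genHarmonic_le n) (by positivity)
  -- first Cauchy product: b
  have hb : HasSum (fun n : ℕ => genHarmonic 1 n * z ^ n)
      (-Real.log (1 - z) * (1 - z)⁻¹) := by
    have h := hasSum_sum_range_mul_of_summable_norm hna hnc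
    rw [ha.tsum_eq, hc.tsum_eq] at h
    convert h using 2 with n
    · rfl
    have hterm : ∀ k ∈ Finset.range (n + 1), z ^ k / (k : ℝ) * z ^ (n - k)
        = (1 / ((k : ℝ))) * z ^ n := by
      intro k hk
      rw [Finset.mem_range] at hk
      rw [div_mul_eq_mul_div, ← pow_add, Nat.add_sub_cancel' (Nat.lt_succ_iff.mp hk)]
      ring
    rw [Finset.sum_congr rfl hterm, ← Finset.sum_mul]
    congr 1
    rw [Finset.sum_range_succ']
    simp only [Nat.cast_zero, div_zero, one_div, add_zero]
    simp [genHarmonic, one_div]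
  -- second Cauchy product
  have hfinal := hasSum_sum_range_mul_of_summable_norm hna hnb
  rw [ha.tsum_eq, hb.tsum_eq] at hfinal
  have heq : (fun n : ℕ => ∑ k ∈ Finset.range (n + 1),
        z ^ k / (k : ℝ) * (genHarmonic 1 (n - k) * z ^ (n - k))) =
      fun n : ℕ => ((genHarmonic 1 n) ^ 2 - genHarmonic 2 n) * z ^ n := by
    funext n
    have hterm : ∀ k ∈ Finset.range (n + 1),
        z ^ k / (k : ℝ) * (genHarmonic 1 (n - k) * z ^ (n - k))
          = (genHarmonic 1 (n - k) / (k : ℝ)) * z ^ n := by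
      intro k hk
      rw [Finset.mem_range] at hk
      rw [mul_comm (genHarmonic 1 (n - k)) (z ^ (n - k)), ← mul_assoc,
        div_mul_eq_mul_div, ← pow_add, Nat.add_sub_cancel' (Nat.lt_succ_iff.mp hk)]
      ring
    rw [Finset.sum_congr rfl hterm, ← Finset.sum_mul, key_identity]
  rw [heq] at hfinal
  rw [hfinal.tsum_eq, div_eq_mul_inv]
  ring
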